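/- Let N ≥ 1 be an integer, f(x) = ReLU(cos(πNx)) and g(x) = 1/π + cos(πNx)/2 on [-1,1]. Then ∫_{-1}^{1} (f(x) − g(x))² dx = (π² − 8)/(4π²). -/

import Mathlib

open Real MeasureTheory intervalIntegral

lemma abs_cos_integrable : ∀ t₁ t₂ : ℝ, IntervalIntegrable (fun t => |Real.cos t|)
    MeasureSpace.volume t₁ t₂ := fun t₁ t₂ => (Real.continuous_cos.abs).intervalIntegrable t₁ t₂

lemma integral_abs_cos_zero_pi : ∫ t in (0:ℝ)..π, |Real.cos t| = 2 := by
  have h1 : ∫ t in (0:ℝ)..(π/2), |Real.cos t| = 1 := by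
    rw [intervalIntegral.integral_congr (g := Real.cos) ?_, integral_cos]
    · simp
    · intro x hx
      rw [Set.uIcc_of_le (by positivity)] at hx
      exact abs_of_nonneg (Real.cos_nonneg_of_mem_Icc ⟨by linarith [hx.1, pi_pos], hx.2⟩)
  have h2 : ∫ t in (π/2)..π, |Real.cos t| = 1 := by
    rw [intervalIntegral.integral_congr (g := fun t => -Real.cos t) ?_]
    · rw [intervalIntegral.integral_neg, integral_cos]; simp
    · intro x hx
      rw [Set.uIcc_of_le (by linarith [pi_pos])] at hx
      exact abs_of_nonpos (Real.cos_nonpos_of_pi_div_two_le_of_le hx.1 (by linarith [hx.2, pi_pos]))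
  rw [← intervalIntegral.integral_add_adjacent_intervals (abs_cos_integrable 0 (π/2))
    (abs_cos_integrable (π/2) π), h1, h2]
  norm_num


/-- For `f x = ReLU(cos(πNx))` and `g x = 1/π + cos(πNx)/2`,
`∫_{-1}^{1} (f x - g x)² dx = (π² - 8)/(4π²)`. -/
theorem integral_aliased_part_sq (N : ℕ) (hN : 1 ≤ N) (f g : ℝ → ℝ)
    (hf : ∀ x, f x = max (Real.cos (π * N * x)) 0)
    (hg : ∀ x, g x = 1 / π + Real.cos (π * N * x) / 2) :
    (∫ x in (-1 : ℝ)..1, (f x - g x) ^ 2) = (π ^ 2 - 8) / (4 * π ^ 2) := by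
  have hπ : (π : ℝ) ≠ 0 := pi_ne_zero
  have hNR : (N : ℝ) ≠ 0 := Nat.cast_ne_zero.mpr (by omega)
  have hc : π * (N : ℝ) ≠ 0 := mul_ne_zero hπ hNR
  -- |cos| integral
  have habs : ∫ x in (-1:ℝ)..1, |Real.cos (π * N * x)| = 4 / π := by
    have := intervalIntegral.integral_comp_mul_left (fun t => |Real.cos t|) hc
      (a := (-1:ℝ)) (b := 1)
    rw [this]
    have hper : Function.Periodic (fun t => |Real.cos t|) π := fun t => by simp [Real.cos_add_pi]
    have h2N : ∫ t in (π * N * (-1))..(π * N * 1), |Real.cos t|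
        = ((2 * N : ℤ) : ℝ) * ∫ t in (0:ℝ)..π, |Real.cos t| := by
      have := hper.intervalIntegral_add_zsmul_eq (2 * N) (π * N * (-1)) abs_cos_integrable
      have he : π * N * (-1) + (2 * N : ℤ) • π = π * N * 1 := by
        push_cast [zsmul_eq_mul]; ring
      rw [he] at this
      rw [this, hper.intervalIntegral_add_eq (π * N * (-1)) 0, zsmul_eq_mul, zero_add]
    rw [h2N, integral_abs_cos_zero_pi, smul_eq_mul]
    push_cast
    field_simp
    ring
  -- cos² integral
  have hsq : ∫ x in (-1:ℝ)..1, Real.cos (π * N * x) ^ 2 = 1 := by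
    have := intervalIntegral.integral_comp_mul_left (fun t => Real.cos t ^ 2) hc
      (a := (-1:ℝ)) (b := 1)
    rw [this, integral_cos_sq, smul_eq_mul]
    have hs : Real.sin (π * N) = 0 := by
      rw [mul_comm]; exact Real.sin_nat_mul_pi N
    have hs' : Real.sin (-(π * N)) = 0 := by rw [Real.sin_neg, hs, neg_zero]
    rw [mul_neg_one, mul_one, hs, hs']
    field_simp
    ring
  have key : ∀ x : ℝ, (f x - g x) ^ 2
      = Real.cos (π * N * x) ^ 2 / 4 - |Real.cos (π * N * x)| * (1 / π) + 1 / π ^ 2 := by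
    intro x
    rw [hf, hg]
    rcases le_total (Real.cos (π * N * x)) 0 with h | h
    · rw [max_eq_right h, abs_of_nonpos h]; ring
    · rw [max_eq_left h, abs_of_nonneg h]; ring
  simp only [key]
  have i1 : IntervalIntegrable (fun x => Real.cos (π * N * x) ^ 2 / 4)
      MeasureSpace.volume (-1) 1 :=
    (((Real.continuous_cos.comp (continuous_const.mul continuous_id)).pow 2).div_const 4
      ).intervalIntegrable _ _
  have i2 : IntervalIntegrable (fun x => |Real.cos (π * N * x)| * (1 / π))
      MeasureSpace.volume (-1) 1 :=
    (((Real.continuous_cos.comp (continuous_const.mul continuous_id)).abs).mul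
      continuous_const).intervalIntegrable _ _
  have i3 : IntervalIntegrable (fun _ : ℝ => 1 / π ^ 2) MeasureSpace.volume (-1) 1 :=
    intervalIntegrable_const
  rw [intervalIntegral.integral_add (i1.sub i2) i3, intervalIntegral.integral_sub i1 i2,
    intervalIntegral.integral_div, intervalIntegral.integral_mul_const,
    intervalIntegral.integral_const, hsq, habs]
  field_simp
  ring_nf
  rw [inv_pow, mul_inv_cancel₀ (pow_ne_zero 2 hπ)]
  ring
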